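/- Let m, n be positive integers, let ε > 0, and let x_1, …, x_n ∈ ℝ^m. Suppose there is an integer j* with 1 ≤ j* < n and a real number v* such that v_j = v* for every j with j* ≤ j ≤ n. Let y_1, …, y_ℓ ∈ ℝ^m be such that for every j ∈ {1,…,j*} there exists k ∈ {1,…,ℓ} with ‖x_j − y_k‖ < ε, and let P be the orthogonal projection of ℝ^m onto the linear span of {y_1,…,y_ℓ}. Then for every integer i ≥ 1 with j* + i ≤ n satisfying the horizon inequality i·(1 − v*) < j*·v* − (1 − v*)/2, one has ‖x_{j*+i} − P x_{j*+i}‖ < 4ε. -/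

import Mathlib

/-- The recurrence count `N_j`: the number of pairs `(i,k) ∈ {1,…,j}²` with
`‖x_i − x_k‖ < ε`. -/
noncomputable def recCount {m : ℕ} (x : ℕ → EuclideanSpace ℝ (Fin m)) (ε : ℝ) (j : ℕ) : ℕ :=
  (((Finset.Icc 1 j) ×ˢ (Finset.Icc 1 j)).filter (fun p => ‖x p.1 - x p.2‖ < ε)).card

/-- The ε-Frobenius potential `v_j = N_j / j²`. -/
noncomputable def frobPot {m : ℕ} (x : ℕ → EuclideanSpace ℝ (Fin m)) (ε : ℝ) (j : ℕ) : ℝ :=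
  (recCount x ε j : ℝ) / (j : ℝ) ^ 2

lemma recCount_succ {m : ℕ} (x : ℕ → EuclideanSpace ℝ (Fin m)) {ε : ℝ} (hε : 0 < ε) (j : ℕ) :
    recCount x ε (j + 1) = recCount x ε j
      + 2 * ((Finset.Icc 1 j).filter (fun k => ‖x (j + 1) - x k‖ < ε)).card + 1 := by
  classical
  have hins : Finset.Icc 1 (j + 1) = insert (j + 1) (Finset.Icc 1 j) := by
    ext a; simp [Finset.mem_Icc]; omega
  have hnot : (j + 1) ∉ Finset.Icc 1 j := by simp
  have key : ∀ s : Finset ℕ,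
      ((s ×ˢ s).filter (fun p : ℕ × ℕ => ‖x p.1 - x p.2‖ < ε)).card
        = ∑ i ∈ s, ∑ k ∈ s, if ‖x i - x k‖ < ε then 1 else 0 := by
    intro s
    rw [Finset.card_filter, Finset.sum_product]
  have hsymm : ∀ i k : ℕ,
      (if ‖x i - x k‖ < ε then (1 : ℕ) else 0) = if ‖x k - x i‖ < ε then 1 else 0 := by
    intro i k; rw [norm_sub_rev]
  have hcard : ∀ t : Finset ℕ, ∀ a : ℕ,
      (∑ k ∈ t, if ‖x a - x k‖ < ε then (1 : ℕ) else 0)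
        = ((t.filter (fun k => ‖x a - x k‖ < ε)).card) := by
    intro t a; rw [Finset.card_filter]
  unfold recCount
  rw [key, key, hins]
  rw [Finset.sum_insert hnot]
  have h1 : (∑ k ∈ insert (j + 1) (Finset.Icc 1 j), if ‖x (j + 1) - x k‖ < ε then (1:ℕ) else 0)
      = 1 + ((Finset.Icc 1 j).filter (fun k => ‖x (j + 1) - x k‖ < ε)).card := by
    rw [Finset.sum_insert hnot, hcard]
    simp [hε]
  have h2 : (∑ i ∈ Finset.Icc 1 j, ∑ k ∈ insert (j + 1) (Finset.Icc 1 j),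
        if ‖x i - x k‖ < ε then (1:ℕ) else 0)
      = ((Finset.Icc 1 j).filter (fun k => ‖x (j + 1) - x k‖ < ε)).card
        + ∑ i ∈ Finset.Icc 1 j, ∑ k ∈ Finset.Icc 1 j, if ‖x i - x k‖ < ε then (1:ℕ) else 0 := by
    have : ∀ i ∈ Finset.Icc 1 j,
        (∑ k ∈ insert (j + 1) (Finset.Icc 1 j), if ‖x i - x k‖ < ε then (1:ℕ) else 0)
          = (if ‖x (j+1) - x i‖ < ε then (1:ℕ) else 0)
            + ∑ k ∈ Finset.Icc 1 j, if ‖x i - x k‖ < ε then (1:ℕ) else 0 := by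
      intro i _
      rw [Finset.sum_insert hnot, hsymm]
    rw [Finset.sum_congr rfl this, Finset.sum_add_distrib, hcard]
  rw [h1, h2]
  ring

/-- if the ε-Frobenius potential is constantly `v*` from time `j*` on, the
vectors `y_1,…,y_ℓ` cover `x_1,…,x_{j*}` within distance `ε`, and `P` is the orthogonal
projection onto the span of the `y_k`, then for every `i ≥ 1` with `j* + i ≤ n`
satisfying the horizon inequality `i(1 − v*) < j* v* − (1 − v*)/2`, one has
`‖x_{j*+i} − P x_{j*+i}‖ < 4ε`. -/
theorem stmt_3 (m n ℓ : ℕ) (hm : 0 < m) (hn : 0 < n) (hℓ : 0 < ℓ) (ε : ℝ) (hε : 0 < ε)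
    (x : ℕ → EuclideanSpace ℝ (Fin m)) (jstar : ℕ) (hj1 : 1 ≤ jstar) (hjn : jstar < n)
    (vstar : ℝ) (hconst : ∀ j : ℕ, jstar ≤ j → j ≤ n → frobPot x ε j = vstar)
    (y : ℕ → EuclideanSpace ℝ (Fin m))
    (hcov : ∀ j : ℕ, 1 ≤ j → j ≤ jstar → ∃ k : ℕ, 1 ≤ k ∧ k ≤ ℓ ∧ ‖x j - y k‖ < ε) :
    ∀ i : ℕ, 1 ≤ i → jstar + i ≤ n →
      (i : ℝ) * (1 - vstar) < (jstar : ℝ) * vstar - (1 - vstar) / 2 →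
      ‖x (jstar + i) -
        (Submodule.orthogonalProjection (Submodule.span ℝ (y '' Set.Icc 1 ℓ)) (x (jstar + i)) :
          EuclideanSpace ℝ (Fin m))‖ < 4 * ε := by
  classical
  intro i hi hin hhor
  -- recCount equals vstar * j^2 for jstar ≤ j ≤ n
  have hN : ∀ j : ℕ, jstar ≤ j → j ≤ n → (recCount x ε j : ℝ) = vstar * (j : ℝ) ^ 2 := by
    intro j h1 h2
    have hj0 : (0 : ℝ) < (j : ℝ) := by exact_mod_cast Nat.lt_of_lt_of_le hj1 h1
    have := hconst j h1 h2
    unfold frobPot at this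
    field_simp at this
    linarith [this]
  -- vstar ≤ 1
  have hv1 : vstar ≤ 1 := by
    have h1 := hN jstar le_rfl (le_of_lt hjn)
    have hle : (recCount x ε jstar : ℝ) ≤ (jstar : ℝ) ^ 2 := by
      have : recCount x ε jstar ≤ jstar ^ 2 := by
        unfold recCount
        calc (((Finset.Icc 1 jstar) ×ˢ (Finset.Icc 1 jstar)).filter
              (fun p => ‖x p.1 - x p.2‖ < ε)).card
            ≤ ((Finset.Icc 1 jstar) ×ˢ (Finset.Icc 1 jstar)).card := Finset.card_filter_le _ _
          _ = jstar ^ 2 := by simp [Finset.card_product, sq]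
      exact_mod_cast this
    have hj0 : (0 : ℝ) < (jstar : ℝ) ^ 2 := by positivity
    nlinarith [h1]
  -- the set of earlier points close to x (jstar + i)
  set j := jstar + i - 1 with hjdef
  have hj : j + 1 = jstar + i := by omega
  have hjge : jstar ≤ j := by omega
  have hstep := recCount_succ x hε j
  rw [hj] at hstep
  set S := (Finset.Icc 1 j).filter (fun k => ‖x (jstar + i) - x k‖ < ε) with hS
  have hcardS : 2 * ((S.card : ℝ)) = vstar * ((jstar + i : ℕ) : ℝ) ^ 2
      - vstar * (j : ℝ) ^ 2 - 1 := by
    have e1 := hN (jstar + i) (by omega) hin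
    have e2 := hN j hjge (by omega)
    have : ((recCount x ε (jstar + i) : ℕ) : ℝ)
        = (recCount x ε j : ℝ) + 2 * (S.card : ℝ) + 1 := by
      rw [hstep]; push_cast; ring
    rw [e1, e2] at this
    linarith
  -- S.card > i - 1 in reals
  have hScard_gt : ((i : ℝ) - 1) < (S.card : ℝ) := by
    have hcast : ((jstar + i : ℕ) : ℝ) = (jstar : ℝ) + i := by push_cast; ring
    have hcastj : (j : ℝ) = (jstar : ℝ) + i - 1 := by
      have : (j : ℝ) = ((jstar + i : ℕ) : ℝ) - 1 := by
        rw [← hj]; push_cast; ring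
      rw [hcast] at this; linarith
    rw [hcast, hcastj] at hcardS
    nlinarith [hcardS, hhor, hv1]
  -- split S: part with index ≤ jstar and part with index > jstar
  have hsplit : ∃ k ∈ S, k ≤ jstar := by
    by_contra h
    push_neg at h
    have hsub : S ⊆ Finset.Icc (jstar + 1) j := by
      intro k hk
      have hk' : k ∈ Finset.Icc 1 j := Finset.mem_of_mem_filter _ hk
      rw [Finset.mem_Icc] at hk' ⊢
      exact ⟨by have := h k hk; omega, hk'.2⟩
    have hle : S.card ≤ i - 1 := by
      calc S.card ≤ (Finset.Icc (jstar + 1) j).card := Finset.card_le_card hsub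
        _ = i - 1 := by rw [Nat.card_Icc]; omega
    have : (S.card : ℝ) ≤ (i : ℝ) - 1 := by
      have : (S.card : ℝ) ≤ ((i - 1 : ℕ) : ℝ) := by exact_mod_cast hle
      have h2 : ((i - 1 : ℕ) : ℝ) = (i : ℝ) - 1 := by
        have : (1 : ℕ) ≤ i := hi
        push_cast [Nat.cast_sub this]; ring
      linarith [this, h2.le, h2.ge]
    linarith
  obtain ⟨k, hkS, hkj⟩ := hsplit
  rw [hS, Finset.mem_filter, Finset.mem_Icc] at hkS
  obtain ⟨⟨hk1, _⟩, hkclose⟩ := hkS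
  obtain ⟨k', hk'1, hk'ℓ, hk'close⟩ := hcov k hk1 hkj
  have hyk' : y k' ∈ Submodule.span ℝ (y '' Set.Icc 1 ℓ) :=
    Submodule.subset_span ⟨k', ⟨hk'1, hk'ℓ⟩, rfl⟩
  -- distance from x (jstar+i) to y k' is < 2ε
  have hdist : ‖x (jstar + i) - y k'‖ < 2 * ε := by
    calc ‖x (jstar + i) - y k'‖ ≤ ‖x (jstar + i) - x k‖ + ‖x k - y k'‖ := by
          have := norm_sub_le_norm_sub_add_norm_sub (x (jstar + i)) (x k) (y k')
          exact this
      _ < ε + ε := by exact add_lt_add hkclose hk'close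
      _ = 2 * ε := by ring
  -- minimality of orthogonal projection
  set K := Submodule.span ℝ (y '' Set.Icc 1 ℓ)
  have hmin : ‖x (jstar + i) - (Submodule.orthogonalProjection K (x (jstar + i)) :
      EuclideanSpace ℝ (Fin m))‖ ≤ ‖x (jstar + i) - y k'‖ := by
    refine (Submodule.starProjection_minimal (U := K) (x (jstar + i))).le.trans ?_
    exact ciInf_le ⟨0, fun r ⟨v, hv⟩ => hv ▸ norm_nonneg _⟩ (⟨y k', hyk'⟩ : K)
  calc ‖x (jstar + i) - (Submodule.orthogonalProjection K (x (jstar + i)) :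
        EuclideanSpace ℝ (Fin m))‖ ≤ ‖x (jstar + i) - y k'‖ := hmin
    _ < 2 * ε := hdist
    _ < 4 * ε := by linarith
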